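/- Let X be a topological space and f : X → Y a quasicontinuous function into a second-countable space Y with countable basis {Vₙ}. Then the set D_f of points of discontinuity of f equals the union over n of the sets f⁻¹(Vₙ) \ interior(f⁻¹(Vₙ)), and each set f⁻¹(Vₙ) \ interior(f⁻¹(Vₙ)) is nowhere dense; in particular, D_f is meager. -/
import Mathlib


theorem discontinuity_set_of_quasicontinuous {X Y : Type*} [TopologicalSpace X]
    [TopologicalSpace Y] (f : X → Y) (V : ℕ → Set Y)
    (hV : TopologicalSpace.IsTopologicalBasis (Set.range V))
    (hf : ∀ O : Set Y, IsOpen O → f ⁻¹' O ⊆ closure (interior (f ⁻¹' O))) :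
    ({x | ¬ ContinuousAt f x} = ⋃ n, (f ⁻¹' V n \ interior (f ⁻¹' V n))) ∧
    (∀ n, IsNowhereDense (f ⁻¹' V n \ interior (f ⁻¹' V n))) ∧
    IsMeagre {x | ¬ ContinuousAt f x} := by
  have hVopen : ∀ n, IsOpen (V n) := fun n => hV.isOpen ⟨n, rfl⟩
  have key : ∀ x, ContinuousAt f x ↔ ∀ n, f x ∈ V n → x ∈ interior (f ⁻¹' V n) := by
    intro x
    constructor
    · intro hc n hn
      rw [mem_interior_iff_mem_nhds]
      exact hc ((hVopen n).mem_nhds hn)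
    · intro h
      rw [ContinuousAt, (hV.nhds_hasBasis (a := f x)).tendsto_right_iff]
      rintro t ⟨⟨n, rfl⟩, hn⟩
      filter_upwards [(isOpen_interior.mem_nhds (h n hn))] with y hy
        using (interior_subset hy : y ∈ f ⁻¹' V n)
  have heq : {x | ¬ ContinuousAt f x} = ⋃ n, (f ⁻¹' V n \ interior (f ⁻¹' V n)) := by
    ext x
    simp only [Set.mem_setOf_eq, key, not_forall, Set.mem_iUnion, Set.mem_diff,
      Set.mem_preimage]
    tauto
  have hnd : ∀ n, IsNowhereDense (f ⁻¹' V n \ interior (f ⁻¹' V n)) := by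
    intro n
    set A := interior (f ⁻¹' V n)
    have hsub : f ⁻¹' V n \ A ⊆ closure A \ A :=
      Set.diff_subset_diff_left (hf _ (hVopen n))
    have : IsNowhereDense (closure A \ A) := by
      have hcl : IsClosed (closure A \ A) := isClosed_closure.sdiff isOpen_interior
      rw [hcl.isNowhereDense_iff]
      rw [Set.eq_empty_iff_forall_notMem]
      intro x hx
      rcases mem_interior.mp hx with ⟨U, hU, hUo, hxU⟩
      have hxc : x ∈ closure A := (hU hxU).1
      rcases mem_closure_iff.mp hxc U hUo hxU with ⟨y, hyU, hyA⟩
      exact (hU hyU).2 hyA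
    rw [IsNowhereDense, Set.eq_empty_iff_forall_notMem]
    intro x hx
    exact Set.eq_empty_iff_forall_notMem.mp this x
      (interior_mono (closure_mono hsub) hx)
  refine ⟨heq, hnd, ?_⟩
  rw [heq]
  refine isMeagre_iUnion fun n => ?_
  rw [isMeagre_iff_countable_union_isNowhereDense]
  exact ⟨{f ⁻¹' V n \ interior (f ⁻¹' V n)}, by simpa using hnd n,
    Set.countable_singleton _, by simp⟩
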